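/- The polynomial 3 + 35x + 105x^2 + 105x^3 + 35x^4 + 3x^5 has all roots real and negative, while the polynomial 3 + 35x + 105x^2 + 105x^3 + 35x^4 has a pair of non-real roots. -/

import Mathlib

lemma quad_real_neg_root (a : ℝ) (ha : 2 < a) (z : ℂ)
    (hz : z ^ 2 + (a : ℂ) * z + 1 = 0) : ∃ x : ℝ, x < 0 ∧ z = (x : ℂ) := by
  set t : ℝ := Real.sqrt (a ^ 2 / 4 - 1) with htdef
  have hnn : (0:ℝ) ≤ a ^ 2 / 4 - 1 := by nlinarith
  have ht : t ^ 2 = a ^ 2 / 4 - 1 := Real.sq_sqrt hnn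
  have ht0 : 0 ≤ t := Real.sqrt_nonneg _
  have htlt : t < a / 2 := by
    rw [htdef]
    rw [Real.sqrt_lt' (by linarith : (0:ℝ) < a / 2)]
    nlinarith
  have ht' : (t : ℂ) ^ 2 = (a : ℂ) ^ 2 / 4 - 1 := by exact_mod_cast congrArg (Complex.ofReal) ht
  have hfac : (z + a / 2 - t) * (z + a / 2 + t) = 0 := by linear_combination hz - ht'
  rcases mul_eq_zero.mp hfac with h | h
  · refine ⟨t - a / 2, by linarith, ?_⟩
    push_cast
    linear_combination h
  · refine ⟨-(a / 2) - t, by linarith, ?_⟩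
    push_cast
    linear_combination h


/-- `3 + 35x + 105x² + 105x³ + 35x⁴ + 3x⁵` has all roots real and negative, while its
truncation `3 + 35x + 105x² + 105x³ + 35x⁴` has a pair of non-real roots. -/
theorem degree_hypothesis_cannot_be_relaxed :
    (∀ z : ℂ, 3 + 35 * z + 105 * z ^ 2 + 105 * z ^ 3 + 35 * z ^ 4 + 3 * z ^ 5 = 0 →
      ∃ x : ℝ, x < 0 ∧ z = (x : ℂ)) ∧
    (∃ z : ℂ, 3 + 35 * z + 105 * z ^ 2 + 105 * z ^ 3 + 35 * z ^ 4 = 0 ∧ z.im ≠ 0) := by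
  constructor
  · -- the quintic: all roots real and negative
      intro z hz
      set s : ℝ := Real.sqrt 55 with hsdef
      have hs : s ^ 2 = 55 := Real.sq_sqrt (by norm_num)
      have hs0 : 0 ≤ s := Real.sqrt_nonneg _
      have hs10 : s < 10 := by
        rw [hsdef, Real.sqrt_lt' (by norm_num : (0:ℝ) < 10)]; norm_num
      have hs' : (s : ℂ) ^ 2 = 55 := by exact_mod_cast congrArg (Complex.ofReal) hs
      have hfac : (z + 1) * ((z ^ 2 + ((16 + s : ℝ) : ℂ) / 3 * z + 1) *
          (z ^ 2 + ((16 - s : ℝ) : ℂ) / 3 * z + 1)) = 0 := by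
        push_cast
        linear_combination hz / 3 - ((z + 1) * z ^ 2 / 9) * hs'
      rcases mul_eq_zero.mp hfac with h | h
      · exact ⟨-1, by norm_num, by push_cast; linear_combination h⟩
      rcases mul_eq_zero.mp h with h | h
      · have := quad_real_neg_root ((16 + s) / 3) (by nlinarith) z (by push_cast at h ⊢; linear_combination h)
        exact this
      · have := quad_real_neg_root ((16 - s) / 3) (by nlinarith) z (by push_cast at h ⊢; linear_combination h)
        exact this
  · -- the quartic: a pair of non-real roots
    open Polynomial in
      by_contra hcon
      push_neg at hcon
      set P : ℂ[X] := C 35 * X ^ 4 + C 105 * X ^ 3 + C 105 * X ^ 2 + C 35 * X + C 3 with hPdef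
      have heval : ∀ z : ℂ, P.eval z = 35 * z ^ 4 + 105 * z ^ 3 + 105 * z ^ 2 + 35 * z + 3 := by
        intro z; simp [hPdef]
      have hdeg : P.natDegree = 4 := by
        rw [hPdef]; compute_degree!
      have hP0 : P ≠ 0 := by
        intro h; rw [h] at hdeg; simp at hdeg
      -- every root of P is real
      have hreal : ∀ z : ℂ, P.eval z = 0 → ∃ x : ℝ, z = (x : ℂ) ∧
          35 * x ^ 4 + 105 * x ^ 3 + 105 * x ^ 2 + 35 * x + 3 = 0 := by
        intro z hz
        rw [heval] at hz
        have him : z.im = 0 := hcon z (by linear_combination hz)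
        have hzre : ((z.re : ℂ)) = z := by
          apply Complex.ext <;> simp [him]
        refine ⟨z.re, hzre.symm, ?_⟩
        have : ((35 * z.re ^ 4 + 105 * z.re ^ 3 + 105 * z.re ^ 2 + 35 * z.re + 3 : ℝ) : ℂ) = 0 := by
          push_cast
          rw [hzre]
          linear_combination hz
        exact_mod_cast this
      have hcard : P.roots.card = 4 := by
        rw [splits_iff_card_roots.mp (IsAlgClosed.splits P), hdeg]
      -- roots are simple
      have hnd : P.roots.Nodup := by
        rw [Multiset.nodup_iff_count_le_one]
        intro z
        by_contra hcnt
        push_neg at hcnt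
        have h2 : 2 ≤ rootMultiplicity z P := by
          rw [← count_roots]; omega
        have hdvd : (X - C z) ^ 2 ∣ P :=
          dvd_trans (pow_dvd_pow _ h2) (pow_rootMultiplicity_dvd P z)
        obtain ⟨g, hg⟩ := hdvd
        have hzroot : P.eval z = 0 := by rw [hg]; simp
        have hdz : P.derivative.eval z = 0 := by
          rw [hg, derivative_mul, derivative_pow]
          simp
        have hdz' : (140 : ℂ) * z ^ 3 + 315 * z ^ 2 + 210 * z + 35 = 0 := by
          rw [hPdef] at hdz
          simp [derivative_mul] at hdz
          linear_combination hdz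
        obtain ⟨x, rfl, hx⟩ := hreal z hzroot
        have hdx : (140 : ℝ) * x ^ 3 + 315 * x ^ 2 + 210 * x + 35 = 0 := by
          exact_mod_cast hdz'
        have hfac : ((x + 1) ^ 2 * (4 * x + 1)) = 0 := by linear_combination hdx / 35
        rcases mul_eq_zero.mp hfac with h | h
        · have : x = -1 := by nlinarith [sq_nonneg (x+1)]
          rw [this] at hx; norm_num at hx
        · have : x = -(1/4) := by linarith
          rw [this] at hx; norm_num at hx
      -- the set of (real parts of) roots
      classical
      have hcardF : P.roots.toFinset.card = 4 := by
        rw [Multiset.toFinset_card_of_nodup hnd, hcard]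
      set s : Finset ℝ := P.roots.toFinset.image Complex.re with hsdef
      have hmemroot : ∀ z ∈ P.roots.toFinset, P.eval z = 0 := by
        intro z hz
        exact (mem_roots hP0).mp (Multiset.mem_toFinset.mp hz)
      have hscard : s.card = 4 := by
        rw [hsdef, Finset.card_image_of_injOn, hcardF]
        intro z hz w hw hre
        obtain ⟨xz, hxz, -⟩ := hreal z (hmemroot z hz)
        obtain ⟨xw, hxw, -⟩ := hreal w (hmemroot w hw)
        apply Complex.ext hre
        rw [hxz, hxw]; simp
      have hsval : ∀ x ∈ s, 35 * x ^ 4 + 105 * x ^ 3 + 105 * x ^ 2 + 35 * x + 3 = 0 := by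
        intro x hx
        rw [hsdef] at hx
        obtain ⟨z, hz, hre⟩ := Finset.mem_image.mp hx
        obtain ⟨y, hy, hval⟩ := hreal z (hmemroot z hz)
        have : y = x := by rw [hy] at hre; simpa using hre
        rwa [this] at hval
      -- sort the four real roots
      set l : List ℝ := s.sort (· ≤ ·) with hldef
      have hlen : l.length = 4 := by rw [hldef, Finset.length_sort, hscard]
      have hsort : l.Pairwise (· < ·) := (Finset.sortedLT_sort s).pairwise
      have hmem : ∀ x ∈ l, 35 * x ^ 4 + 105 * x ^ 3 + 105 * x ^ 2 + 35 * x + 3 = 0 := by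
        intro x hx
        exact hsval x ((Finset.mem_sort _).mp hx)
      obtain ⟨a, t, hl0⟩ := List.exists_of_length_succ l hlen
      rw [hl0] at hlen
      simp only [List.length_cons, Nat.succ_inj] at hlen
      obtain ⟨b, c, d, ht⟩ := List.length_eq_three.mp hlen
      have hl : l = [a, b, c, d] := by rw [hl0, ht]
      rw [hl] at hsort hmem
      simp [List.pairwise_cons] at hsort
      obtain ⟨⟨hab, -, -⟩, ⟨hbc, -⟩, hcd⟩ := hsort
      have ha := hmem a (by simp)
      have hb := hmem b (by simp)
      have hc := hmem c (by simp)
      have hd := hmem d (by simp)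
      -- Rolle between consecutive roots
      set f : ℝ → ℝ := fun x => 35 * x ^ 4 + 105 * x ^ 3 + 105 * x ^ 2 + 35 * x + 3 with hfdef
      have hder : ∀ x : ℝ, HasDerivAt f (140 * x ^ 3 + 315 * x ^ 2 + 210 * x + 35) x := by
        intro x
        have h := ((((hasDerivAt_pow 4 x).const_mul (35:ℝ)).add
            ((hasDerivAt_pow 3 x).const_mul (105:ℝ))).add
            ((hasDerivAt_pow 2 x).const_mul (105:ℝ))).add
            (((hasDerivAt_pow 1 x).const_mul (35:ℝ)).add_const (3:ℝ))
        convert h using 1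
        · rfl
        · rfl
        · funext y; rw [hfdef]; simp only [Pi.add_apply]; ring
        · push_cast; ring
      have rolle : ∀ u v : ℝ, u < v → f u = 0 → f v = 0 →
          ∃ e, u < e ∧ e < v ∧ (e = -1 ∨ e = -(1/4)) := by
        intro u v huv hu hv
        obtain ⟨e, he, he0⟩ := exists_hasDerivAt_eq_zero huv
          (Continuous.continuousOn (by rw [hfdef]; fun_prop)) (hu.trans hv.symm)
          (fun x _ => hder x)
        refine ⟨e, he.1, he.2, ?_⟩
        have hfac : ((e + 1) ^ 2 * (4 * e + 1)) = 0 := by linear_combination he0 / 35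
        rcases mul_eq_zero.mp hfac with h | h
        · left; nlinarith [sq_nonneg (e+1)]
        · right; linarith
      obtain ⟨e1, h1a, h1b, h1⟩ := rolle a b hab ha hb
      obtain ⟨e2, h2a, h2b, h2⟩ := rolle b c hbc hb hc
      obtain ⟨e3, h3a, h3b, h3⟩ := rolle c d hcd hc hd
      rcases h1 with rfl | rfl <;> rcases h2 with rfl | rfl <;> rcases h3 with rfl | rfl <;> linarith
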